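/- For γ > 1 and α = (γ-1)/2, the map x ↦ √((1 - x^{-1/α})(x^{γ/α} - 1)) is convex on the interval [1, ∞). -/

import Mathlib

open Real Set Filter Topology

/-- κ = √γ / α with α = (γ-1)/2. -/
noncomputable def kappa (γ : ℝ) : ℝ := Real.sqrt γ / ((γ - 1) / 2)

/-- The shock branch x ↦ √((1 - x^{-1/α})(x^{γ/α} - 1)), α = (γ-1)/2. -/
noncomputable def shockPart (γ : ℝ) (x : ℝ) : ℝ :=
  Real.sqrt ((1 - x ^ (-(1 : ℝ) / ((γ - 1) / 2))) * (x ^ (γ / ((γ - 1) / 2)) - 1))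

/-- Backward auxiliary function φ← : rarefaction branch κ(x-1) for x ≤ 1,
    shock branch for x ≥ 1 (they agree, with value 0, at x = 1). -/
noncomputable def phiB (γ : ℝ) (x : ℝ) : ℝ :=
  if x ≤ 1 then kappa γ * (x - 1) else shockPart γ x

/-- Forward auxiliary function φ→ : shock branch -√(...) for x ≤ 1,
    rarefaction branch κ(x-1) for x ≥ 1 (they agree, with value 0, at x = 1). -/
noncomputable def phiF (γ : ℝ) (x : ℝ) : ℝ :=
  if x < 1 then -shockPart γ x else kappa γ * (x - 1)

namespace ShockAux

noncomputable def Gf (a x : ℝ) : ℝ := (1 - x ^ (-a)) * (x ^ (a+2) - 1)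
noncomputable def G1 (a x : ℝ) : ℝ :=
  a * x ^ (-a-1) * (x ^ (a+2) - 1) + (1 - x ^ (-a)) * ((a+2) * x ^ (a+1))
noncomputable def G2 (a x : ℝ) : ℝ :=
  a*(-a-1) * x ^ (-a-2) * (x ^ (a+2) - 1) + 2 * (a * x ^ (-a-1) * ((a+2) * x ^ (a+1)))
    + (1 - x ^ (-a)) * ((a+2)*(a+1) * x ^ a)
noncomputable def G3 (a x : ℝ) : ℝ :=
  a*(-a-1)*(-a-2) * x ^ (-a-3) * (x ^ (a+2) - 1)
  + 3 * (a*(-a-1) * x ^ (-a-2) * ((a+2) * x ^ (a+1)))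
  + 3 * (a * x ^ (-a-1) * ((a+2)*(a+1) * x ^ a))
  + (1 - x ^ (-a)) * ((a+2)*(a+1)*a * x ^ (a-1))
noncomputable def Hf (a x : ℝ) : ℝ := 2 * (Gf a x * G2 a x) - (G1 a x)^2

lemma hdr {x : ℝ} (hx : 0 < x) (c c' : ℝ) (h : c' = c - 1) :
    HasDerivAt (fun y : ℝ => y ^ c) (c * x ^ c') x := by
  subst h; exact Real.hasDerivAt_rpow_const (Or.inl hx.ne')

lemma hGf (a : ℝ) {x : ℝ} (hx : 0 < x) : HasDerivAt (Gf a) (G1 a x) x := by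
  have h1 : HasDerivAt (fun y : ℝ => 1 - y ^ (-a)) (a * x ^ (-a-1)) x := by
    have := (hdr hx (-a) (-a-1) (by ring)).const_sub 1
    convert this using 1 <;> (try rfl) <;> ring
  have h2 : HasDerivAt (fun y : ℝ => y ^ (a+2) - 1) ((a+2) * x ^ (a+1)) x := by
    exact (hdr hx (a+2) (a+1) (by ring)).sub_const 1
  have := h1.mul h2
  convert this using 1 <;> rfl

lemma hG1 (a : ℝ) {x : ℝ} (hx : 0 < x) : HasDerivAt (G1 a) (G2 a x) x := by
  have h1 : HasDerivAt (fun y : ℝ => 1 - y ^ (-a)) (a * x ^ (-a-1)) x := by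
    have := (hdr hx (-a) (-a-1) (by ring)).const_sub 1
    convert this using 1 <;> (try rfl) <;> ring
  have h2 : HasDerivAt (fun y : ℝ => y ^ (a+2) - 1) ((a+2) * x ^ (a+1)) x := by
    exact (hdr hx (a+2) (a+1) (by ring)).sub_const 1
  have t1 := ((hdr hx (-a-1) (-a-2) (by ring)).const_mul a).mul h2
  have t2 := h1.mul ((hdr hx (a+1) a (by ring)).const_mul (a+2))
  have := t1.add t2
  convert this using 1 <;> (try rfl) <;> unfold G2 <;> ring

lemma hG2 (a : ℝ) {x : ℝ} (hx : 0 < x) : HasDerivAt (G2 a) (G3 a x) x := by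
  have h1 : HasDerivAt (fun y : ℝ => 1 - y ^ (-a)) (a * x ^ (-a-1)) x := by
    have := (hdr hx (-a) (-a-1) (by ring)).const_sub 1
    convert this using 1 <;> (try rfl) <;> ring
  have h2 : HasDerivAt (fun y : ℝ => y ^ (a+2) - 1) ((a+2) * x ^ (a+1)) x := by
    exact (hdr hx (a+2) (a+1) (by ring)).sub_const 1
  have t1 := ((hdr hx (-a-2) (-a-3) (by ring)).const_mul (a*(-a-1))).mul h2
  have t2 := (((hdr hx (-a-1) (-a-2) (by ring)).const_mul a).mul
      ((hdr hx (a+1) a (by ring)).const_mul (a+2))).const_mul 2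
  have t3 := h1.mul ((hdr hx a (a-1) (by ring)).const_mul ((a+2)*(a+1)))
  have := (t1.add t2).add t3
  convert this using 1 <;> (try rfl) <;> unfold G3 <;> ring

lemma hHf (a : ℝ) {x : ℝ} (hx : 0 < x) :
    HasDerivAt (Hf a) (2 * (Gf a x * G3 a x)) x := by
  have := (((hGf a hx).mul (hG2 a hx)).const_mul 2).sub ((hG1 a hx).pow 2)
  convert this using 1 <;> (try rfl) <;> push_cast <;> ring

lemma G3_eq (a : ℝ) {x : ℝ} (hx : 0 < x) :
    G3 a x = a*(a+1)*(a+2) * (x ^ (a-1) - x ^ (-a-3)) := by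
  have m1 : x ^ (-a-3) * x ^ (a+2) = x ^ (-1:ℝ) := by
    rw [← Real.rpow_add hx, show (-a-3)+(a+2) = (-1:ℝ) by ring]
  have m2 : x ^ (-a-2) * x ^ (a+1) = x ^ (-1:ℝ) := by
    rw [← Real.rpow_add hx, show (-a-2)+(a+1) = (-1:ℝ) by ring]
  have m3 : x ^ (-a-1) * x ^ a = x ^ (-1:ℝ) := by
    rw [← Real.rpow_add hx, show (-a-1)+a = (-1:ℝ) by ring]
  have m4 : x ^ (-a) * x ^ (a-1) = x ^ (-1:ℝ) := by
    rw [← Real.rpow_add hx, show (-a)+(a-1) = (-1:ℝ) by ring]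
  unfold G3
  linear_combination (a*(a+1)*(a+2)) * m1 - 3*(a*(a+1)*(a+2)) * m2
    + 3*(a*(a+1)*(a+2)) * m3 - (a*(a+1)*(a+2)) * m4

lemma G3_nonneg {a : ℝ} (ha : 0 < a) {x : ℝ} (hx : 1 ≤ x) : 0 ≤ G3 a x := by
  have hx0 : 0 < x := lt_of_lt_of_le one_pos hx
  rw [G3_eq a hx0]
  have h := Real.rpow_le_rpow_of_exponent_le hx (show -a-3 ≤ a-1 by linarith)
  have hK : 0 ≤ a*(a+1)*(a+2) := by positivity
  nlinarith

lemma Gf_nonneg {a : ℝ} (ha : 0 < a) {x : ℝ} (hx : 1 ≤ x) : 0 ≤ Gf a x := by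
  have h1 : x ^ (-a) ≤ 1 := Real.rpow_le_one_of_one_le_of_nonpos hx (by linarith)
  have h2 : (1:ℝ) ≤ x ^ (a+2) := Real.one_le_rpow hx (by linarith)
  exact mul_nonneg (by linarith) (by linarith)

lemma Gf_pos {a : ℝ} (ha : 0 < a) {x : ℝ} (hx : 1 < x) : 0 < Gf a x := by
  have h1 : x ^ (-a) < 1 := Real.rpow_lt_one_of_one_lt_of_neg hx (by linarith)
  have h2 : (1:ℝ) < x ^ (a+2) := Real.one_lt_rpow hx (by linarith)
  exact mul_pos (by linarith) (by linarith)

lemma Hf_one (a : ℝ) : Hf a 1 = 0 := by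
  simp [Hf, Gf, G1, Real.one_rpow]

lemma Hf_nonneg {a : ℝ} (ha : 0 < a) {x : ℝ} (hx : 1 ≤ x) : 0 ≤ Hf a x := by
  have hdo : DifferentiableOn ℝ (Hf a) (Ici 1) := fun y hy =>
    (hHf a (lt_of_lt_of_le one_pos hy)).differentiableAt.differentiableWithinAt
  have hmono : MonotoneOn (Hf a) (Ici 1) := by
    apply monotoneOn_of_deriv_nonneg (convex_Ici 1) hdo.continuousOn
      (hdo.mono interior_subset)
    intro y hy
    rw [interior_Ici] at hy
    have hy0 : (0:ℝ) < y := lt_trans one_pos hy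
    rw [(hHf a hy0).deriv]
    have := mul_nonneg (Gf_nonneg ha hy.le) (G3_nonneg ha hy.le)
    linarith
  calc (0:ℝ) = Hf a 1 := (Hf_one a).symm
    _ ≤ Hf a x := hmono self_mem_Ici hx hx

end ShockAux

/-- the shock branch is convex on [1, ∞). -/
theorem shockPart_convexOn (γ : ℝ) (hγ : 1 < γ) :
    ConvexOn ℝ (Set.Ici (1 : ℝ)) (shockPart γ) := by
  have hγ1 : (0:ℝ) < γ - 1 := by linarith
  set a : ℝ := 2/(γ-1) with ha_def
  have ha : 0 < a := by positivity
  have hfe : shockPart γ = fun x => Real.sqrt (ShockAux.Gf a x) := by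
    funext x
    unfold shockPart ShockAux.Gf
    rw [show -(1:ℝ)/((γ-1)/2) = -a by rw [ha_def]; field_simp,
        show γ/((γ-1)/2) = a+2 by rw [ha_def]; field_simp; ring]
  rw [hfe]
  set f : ℝ → ℝ := fun x => Real.sqrt (ShockAux.Gf a x) with hf_def
  set F1 : ℝ → ℝ := fun y => ShockAux.G1 a y / (2 * Real.sqrt (ShockAux.Gf a y)) with hF1_def
  have hd1 : ∀ y ∈ Ioi (1:ℝ), HasDerivAt f (F1 y) y := fun y hy =>
    (ShockAux.hGf a (lt_trans one_pos hy)).sqrt (ShockAux.Gf_pos ha hy).ne'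
  have hGfd : DifferentiableOn ℝ (ShockAux.Gf a) (Ici 1) := fun y hy =>
    (ShockAux.hGf a (lt_of_lt_of_le one_pos hy)).differentiableAt.differentiableWithinAt
  have hGfc : ContinuousOn (ShockAux.Gf a) (Ici 1) := hGfd.continuousOn
  have hd2 : ∀ x ∈ Ioi (1:ℝ), HasDerivAt (deriv f)
      ((ShockAux.G2 a x * (2 * Real.sqrt (ShockAux.Gf a x)) -
        ShockAux.G1 a x * (2 * (ShockAux.G1 a x / (2 * Real.sqrt (ShockAux.Gf a x))))) /
        (2 * Real.sqrt (ShockAux.Gf a x))^2) x := by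
    intro x hx
    have hx0 : (0:ℝ) < x := lt_trans one_pos hx
    have hGp := ShockAux.Gf_pos ha hx
    have hs : 0 < Real.sqrt (ShockAux.Gf a x) := Real.sqrt_pos.2 hGp
    have hev : deriv f =ᶠ[𝓝 x] F1 :=
      Filter.eventuallyEq_of_mem (Ioi_mem_nhds hx) (fun y hy => (hd1 y hy).deriv)
    have hF2 : HasDerivAt F1
        ((ShockAux.G2 a x * (2 * Real.sqrt (ShockAux.Gf a x)) -
          ShockAux.G1 a x * (2 * (ShockAux.G1 a x / (2 * Real.sqrt (ShockAux.Gf a x))))) /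
          (2 * Real.sqrt (ShockAux.Gf a x))^2) x :=
      (ShockAux.hG1 a hx0).div
        (((ShockAux.hGf a hx0).sqrt hGp.ne').const_mul 2) (by positivity)
    exact hF2.congr_of_eventuallyEq hev
  apply convexOn_of_deriv2_nonneg (convex_Ici 1)
  · exact Real.continuous_sqrt.comp_continuousOn hGfc
  · rw [interior_Ici]
    exact fun y hy => (hd1 y hy).differentiableAt.differentiableWithinAt
  · rw [interior_Ici]
    exact fun y hy => (hd2 y hy).differentiableAt.differentiableWithinAt
  · rw [interior_Ici]
    intro x hx
    have hx0 : (0:ℝ) < x := lt_trans one_pos hx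
    have hGp := ShockAux.Gf_pos ha hx
    have hs : 0 < Real.sqrt (ShockAux.Gf a x) := Real.sqrt_pos.2 hGp
    have h2 : deriv^[2] f x = deriv (deriv f) x := rfl
    rw [h2, (hd2 x hx).deriv]
    set s := Real.sqrt (ShockAux.Gf a x) with hs_def
    have hs2 : s^2 = ShockAux.Gf a x := Real.sq_sqrt hGp.le
    have hnum : ShockAux.G2 a x * (2*s) - ShockAux.G1 a x * (2*(ShockAux.G1 a x/(2*s)))
        = ShockAux.Hf a x / s := by
      rw [eq_div_iff hs.ne']
      have hHfeq : ShockAux.Hf a x = 2*(s^2 * ShockAux.G2 a x) - (ShockAux.G1 a x)^2 := by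
        unfold ShockAux.Hf; rw [← hs2]
      rw [hHfeq]
      field_simp
    rw [hnum]
    have hHfnn := ShockAux.Hf_nonneg ha hx.le
    positivity
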